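/- Let k > 0 be a real number and let ℰ be a real number satisfying (k+1) ℰ² − 3(k+1) ℰ + 2k = 0; equivalently, ℰ = 3/2 − (1/2)√((k+9)/(k+1)) or ℰ = 3/2 + (1/2)√((k+9)/(k+1)). Define ψ(r) = r^{(k−1)/2} e^{−ℰ r} (1 + ℰ r + (ℰ(ℰ(k+1) − k − 3)/(2k)) r²) for r > 0. Then −ψ''(r) + ((k−1)(k−3)/(4r²)) ψ(r) − ((k+3)ℰ/(r+1)) ψ(r) = −ℰ² ψ(r) for all r > 0. -/

import Mathlib

lemma softcore_key (e E b0 b1 b2 b3 b4 : ℝ) {r : ℝ} (hr : 0 < r) :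
    HasDerivAt (fun x : ℝ => x ^ e * Real.exp (-E * x)
        * (b0 + b1*x + b2*x^2 + b3*x^3 + b4*x^4))
      (r ^ (e - 1) * Real.exp (-E * r) *
        (e * (b0 + b1*r + b2*r^2 + b3*r^3 + b4*r^4)
          - E * r * (b0 + b1*r + b2*r^2 + b3*r^3 + b4*r^4)
          + r * (b1 + 2*b2*r + 3*b3*r^2 + 4*b4*r^3))) r := by
  have h1 : HasDerivAt (fun x : ℝ => x ^ e) (e * r ^ (e-1)) r :=
    Real.hasDerivAt_rpow_const (Or.inl hr.ne')
  have h2 : HasDerivAt (fun x : ℝ => Real.exp (-E * x)) (Real.exp (-E*r) * (-E)) r := by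
    simpa using (((hasDerivAt_id r).const_mul (-E)).exp)
  have h3 : HasDerivAt (fun x : ℝ => b0 + b1*x + b2*x^2 + b3*x^3 + b4*x^4)
      (b1 + 2*b2*r + 3*b3*r^2 + 4*b4*r^3) r := by
    have := ((((hasDerivAt_id r).const_mul b1).const_add b0).add
      ((hasDerivAt_pow 2 r).const_mul b2)).add
      ((((hasDerivAt_pow 3 r).const_mul b3)).add ((hasDerivAt_pow 4 r).const_mul b4))
    convert this using 1
    · rfl
    · rfl
    · ext x; simp only [id_eq, Pi.add_apply]; ring
    · push_cast; ring
  have h := (h1.mul h2).mul h3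
  convert h using 1
  · rfl
  · rfl
  · rfl
  have hre : r ^ e = r ^ (e-1) * r := by
    rw [← Real.rpow_add_one hr.ne']; ring_nf
  simp only [Pi.mul_apply]; rw [hre]; ring

theorem softcore_degree_two_states
    (k : ℝ) (hk : 0 < k) (ℰ : ℝ)
    (hℰ : (k + 1) * ℰ ^ 2 - 3 * (k + 1) * ℰ + 2 * k = 0)
    (ψ : ℝ → ℝ)
    (hψ : ∀ r ∈ Set.Ioi (0 : ℝ), ψ r = r ^ ((k - 1) / 2) * Real.exp (-ℰ * r)
      * (1 + ℰ * r + (ℰ * (ℰ * (k + 1) - k - 3) / (2 * k)) * r ^ 2)) :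
    ∀ r ∈ Set.Ioi (0 : ℝ),
      -deriv (deriv ψ) r + ((k - 1) * (k - 3) / (4 * r ^ 2)) * ψ r
        - ((k + 3) * ℰ / (r + 1)) * ψ r = -ℰ ^ 2 * ψ r := by
  have ha : ℰ * (ℰ * (k + 1) - k - 3) / (2 * k) = ℰ - 1 := by
    field_simp
    linear_combination hℰ
  -- the eigenfunction written with the simplified coefficient
  set e : ℝ := (k - 1) / 2 with he
  have hψf : ∀ x ∈ Set.Ioi (0 : ℝ), ψ x = x ^ e * Real.exp (-ℰ * x)
      * (1 + ℰ*x + (ℰ-1)*x^2 + 0*x^3 + 0*x^4) := by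
    intro x hx
    rw [hψ x hx, ha]; ring
  -- the first derivative of ψ on (0,∞)
  have hD1 : ∀ x ∈ Set.Ioi (0 : ℝ), deriv ψ x = x ^ (e-1) * Real.exp (-ℰ * x)
      * (e + e*ℰ*x + (e*(ℰ-1) - ℰ^2 + 2*(ℰ-1))*x^2 + (-(ℰ*(ℰ-1)))*x^3 + 0*x^4) := by
    intro x hx
    have hx0 : (0:ℝ) < x := hx
    have hmem : Set.Ioi (0:ℝ) ∈ nhds x := isOpen_Ioi.mem_nhds hx
    have heq : ψ =ᶠ[nhds x] fun y => y ^ e * Real.exp (-ℰ * y)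
        * (1 + ℰ*y + (ℰ-1)*y^2 + 0*y^3 + 0*y^4) :=
      Filter.eventually_of_mem hmem hψf
    rw [heq.deriv_eq, (softcore_key e ℰ 1 ℰ (ℰ-1) 0 0 hx0).deriv]
    ring
  intro r hr
  have hr0 : (0:ℝ) < r := hr
  have hmem : Set.Ioi (0:ℝ) ∈ nhds r := isOpen_Ioi.mem_nhds hr
  have heq : deriv ψ =ᶠ[nhds r] fun y => y ^ (e-1) * Real.exp (-ℰ * y)
      * (e + e*ℰ*y + (e*(ℰ-1) - ℰ^2 + 2*(ℰ-1))*y^2 + (-(ℰ*(ℰ-1)))*y^3 + 0*y^4) :=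
    Filter.eventually_of_mem hmem hD1
  have hdd : deriv (deriv ψ) r = r ^ (e-1-1) * Real.exp (-ℰ * r) *
      ((e-1) * (e + e*ℰ*r + (e*(ℰ-1) - ℰ^2 + 2*(ℰ-1))*r^2 + (-(ℰ*(ℰ-1)))*r^3 + 0*r^4)
        - ℰ * r * (e + e*ℰ*r + (e*(ℰ-1) - ℰ^2 + 2*(ℰ-1))*r^2 + (-(ℰ*(ℰ-1)))*r^3 + 0*r^4)
        + r * (e*ℰ + 2*(e*(ℰ-1) - ℰ^2 + 2*(ℰ-1))*r + 3*(-(ℰ*(ℰ-1)))*r^2 + 4*0*r^3)) := by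
    rw [heq.deriv_eq,
      (softcore_key (e-1) ℰ e (e*ℰ) (e*(ℰ-1) - ℰ^2 + 2*(ℰ-1)) (-(ℰ*(ℰ-1))) 0 hr0).deriv]
  have hsplit : r ^ e = r ^ (e-1-1) * r ^ 2 := by
    rw [← Real.rpow_natCast r 2, ← Real.rpow_add hr0]
    congr 1
    push_cast
    ring
  rw [hψf r hr, hdd, hsplit, he]
  have hr1 : r + 1 ≠ 0 := by positivity
  have hE : Real.exp (-ℰ * r) ≠ 0 := (Real.exp_pos _).ne'
  field_simp
  linear_combination (16 * r ^ 2 * (1 + r)) * hℰ
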